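/- The Fomin–Kirillov algebra FK₃ (the quotient of k⟨x₀,x₁,x₂⟩ by x₀² = x₁² = x₂² = 0 and x₀x₁ + x₁x₂ + x₂x₀ = x₁x₀ + x₂x₁ + x₀x₂ = 0) has dimension 12 as a k-vector space, with basis {1, x₀, x₁, x₂, x₂x₀, x₀x₂, x₁x₀, x₀x₁, x₀x₁x₀, x₂x₀x₂, x₂x₀x₁, x₂x₀x₁x₀}. -/

import Mathlib

noncomputable section

/-- The defining relations of the Fomin–Kirillov algebra `FK₃`. -/
inductive FKRel (k : Type) [Field k] :
    FreeAlgebra k (Fin 3) → FreeAlgebra k (Fin 3) → Prop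
  | sq (i : Fin 3) : FKRel k (FreeAlgebra.ι k i * FreeAlgebra.ι k i) 0
  | r1 : FKRel k (FreeAlgebra.ι k 0 * FreeAlgebra.ι k 1 +
      FreeAlgebra.ι k 1 * FreeAlgebra.ι k 2 +
      FreeAlgebra.ι k 2 * FreeAlgebra.ι k 0) 0
  | r2 : FKRel k (FreeAlgebra.ι k 1 * FreeAlgebra.ι k 0 +
      FreeAlgebra.ι k 2 * FreeAlgebra.ι k 1 +
      FreeAlgebra.ι k 0 * FreeAlgebra.ι k 2) 0

/-- The Fomin–Kirillov algebra `FK₃`: the quotient of the free algebra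
`k⟨x₀,x₁,x₂⟩` by the relations `xᵢ² = 0`, `x₀x₁ + x₁x₂ + x₂x₀ = 0` and
`x₁x₀ + x₂x₁ + x₀x₂ = 0`. -/
abbrev FK3 (k : Type) [Field k] := RingQuot (FKRel k)

/-- The generators `x₀, x₁, x₂` of `FK₃`. -/
def xg (k : Type) [Field k] (i : Fin 3) : FK3 k :=
  RingQuot.mkAlgHom k (FKRel k) (FreeAlgebra.ι k i)

section Lemmas
variable (k : Type) [Field k]

-- specialized arithmetic lemmas for `FK3 k` (instance paths on `RingQuot` are
-- not syntactically the standard ones, so we respecialize).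
lemma q_neg_mul (A B : FK3 k) : -A * B = -(A * B) := neg_mul A B
lemma q_mul_neg (A B : FK3 k) : A * -B = -(A * B) := mul_neg A B
lemma q_neg_neg (A : FK3 k) : -(-A) = A := neg_neg A
lemma q_neg_zero : -(0 : FK3 k) = 0 := neg_zero
lemma q_mul_zero (A : FK3 k) : A * 0 = 0 := mul_zero A
lemma q_zero_mul (A : FK3 k) : 0 * A = 0 := zero_mul A
lemma q_mul_one (A : FK3 k) : A * 1 = A := mul_one A
lemma q_one_mul (A : FK3 k) : 1 * A = A := one_mul A
lemma q_mul_add (A B C : FK3 k) : A * (B + C) = A * B + A * C := mul_add A B C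
lemma q_add_mul (A B C : FK3 k) : (A + B) * C = A * C + B * C := add_mul A B C
lemma q_mul_sub (A B C : FK3 k) : A * (B - C) = A * B - A * C := mul_sub A B C
lemma q_sub_mul (A B C : FK3 k) : (A - B) * C = A * C - B * C := sub_mul A B C
lemma q_sub_zero (A : FK3 k) : A - 0 = A := sub_zero A
lemma q_zero_sub (A : FK3 k) : 0 - A = -A := zero_sub A
lemma q_add_zero (A : FK3 k) : A + 0 = A := add_zero A
lemma q_zero_add (A : FK3 k) : 0 + A = A := zero_add A

lemma fk_sq (i : Fin 3) : xg k i * xg k i = 0 := by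
  have h := RingQuot.mkAlgHom_rel k (FKRel.sq (k := k) i)
  simp only [map_mul, map_zero] at h
  exact h

lemma fk_r1 : xg k 0 * xg k 1 + xg k 1 * xg k 2 + xg k 2 * xg k 0 = 0 := by
  have h := RingQuot.mkAlgHom_rel k (FKRel.r1 (k := k))
  simp only [map_add, map_mul, map_zero] at h
  exact h

lemma fk_r2 : xg k 1 * xg k 0 + xg k 2 * xg k 1 + xg k 0 * xg k 2 = 0 := by
  have h := RingQuot.mkAlgHom_rel k (FKRel.r2 (k := k))
  simp only [map_add, map_mul, map_zero] at h
  exact h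

lemma s_bc : xg k 1 * xg k 2 = -(xg k 0 * xg k 1) - xg k 2 * xg k 0 := by
  have h := fk_r1 k
  rw [← sub_eq_zero, show xg k 1 * xg k 2 - (-(xg k 0 * xg k 1) - xg k 2 * xg k 0)
    = xg k 0 * xg k 1 + xg k 1 * xg k 2 + xg k 2 * xg k 0 from by abel]
  exact h

lemma s_cb : xg k 2 * xg k 1 = -(xg k 1 * xg k 0) - xg k 0 * xg k 2 := by
  have h := fk_r2 k
  rw [← sub_eq_zero, show xg k 2 * xg k 1 - (-(xg k 1 * xg k 0) - xg k 0 * xg k 2)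
    = xg k 1 * xg k 0 + xg k 2 * xg k 1 + xg k 0 * xg k 2 from by abel]
  exact h

lemma s_ca : xg k 2 * xg k 0 = -(xg k 0 * xg k 1) - xg k 1 * xg k 2 := by
  have h := fk_r1 k
  rw [← sub_eq_zero, show xg k 2 * xg k 0 - (-(xg k 0 * xg k 1) - xg k 1 * xg k 2)
    = xg k 0 * xg k 1 + xg k 1 * xg k 2 + xg k 2 * xg k 0 from by abel]
  exact h

lemma s_ba : xg k 1 * xg k 0 = -(xg k 2 * xg k 1) - xg k 0 * xg k 2 := by
  have h := fk_r2 k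
  rw [← sub_eq_zero, show xg k 1 * xg k 0 - (-(xg k 2 * xg k 1) - xg k 0 * xg k 2)
    = xg k 1 * xg k 0 + xg k 2 * xg k 1 + xg k 0 * xg k 2 from by abel]
  exact h

lemma s_ac : xg k 0 * xg k 2 = -(xg k 1 * xg k 0) - xg k 2 * xg k 1 := by
  have h := fk_r2 k
  rw [← sub_eq_zero, show xg k 0 * xg k 2 - (-(xg k 1 * xg k 0) - xg k 2 * xg k 1)
    = xg k 1 * xg k 0 + xg k 2 * xg k 1 + xg k 0 * xg k 2 from by abel]
  exact h

lemma s_sq' (i : Fin 3) (x : FK3 k) : xg k i * (xg k i * x) = 0 := by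
  rw [← mul_assoc, fk_sq, q_zero_mul]

lemma s_bc' (x : FK3 k) :
    xg k 1 * (xg k 2 * x) = -(xg k 0 * (xg k 1 * x)) - xg k 2 * (xg k 0 * x) := by
  rw [← mul_assoc, s_bc]
  simp only [q_sub_mul, q_neg_mul, mul_assoc]

lemma s_cb' (x : FK3 k) :
    xg k 2 * (xg k 1 * x) = -(xg k 1 * (xg k 0 * x)) - xg k 0 * (xg k 2 * x) := by
  rw [← mul_assoc, s_cb]
  simp only [q_sub_mul, q_neg_mul, mul_assoc]

lemma s_aca : xg k 0 * (xg k 2 * xg k 0) = xg k 2 * (xg k 0 * xg k 2) := by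
  rw [s_ca k, show xg k 2 * (xg k 0 * xg k 2) = (xg k 2 * xg k 0) * xg k 2 from
    (mul_assoc _ _ _).symm, s_ca k]
  simp only [q_mul_sub, q_sub_mul, q_mul_neg, q_neg_mul, mul_assoc, s_sq', fk_sq,
    q_mul_zero, q_neg_zero, q_zero_sub, q_neg_neg, q_sub_zero]

lemma s_aca' (x : FK3 k) :
    xg k 0 * (xg k 2 * (xg k 0 * x)) = xg k 2 * (xg k 0 * (xg k 2 * x)) := by
  have h := congrArg (fun y => y * x) (s_aca k)
  simpa only [mul_assoc] using h

lemma s_bab : xg k 1 * (xg k 0 * xg k 1) = xg k 0 * (xg k 1 * xg k 0) := by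
  conv_lhs => rw [← mul_assoc, s_ba k]
  simp only [q_sub_mul, q_neg_mul, mul_assoc, fk_sq, q_mul_zero, q_neg_zero, q_zero_sub,
    q_neg_neg]
  rw [s_cb k]
  simp only [q_mul_sub, q_mul_neg, s_sq', q_neg_neg, q_neg_zero, q_sub_zero, q_add_zero]

lemma s_bab' (x : FK3 k) :
    xg k 1 * (xg k 0 * (xg k 1 * x)) = xg k 0 * (xg k 1 * (xg k 0 * x)) := by
  have h := congrArg (fun y => y * x) (s_bab k)
  simpa only [mul_assoc] using h

lemma s_bac : xg k 1 * (xg k 0 * xg k 2) = xg k 2 * (xg k 0 * xg k 1) := by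
  rw [s_ac k]
  simp only [q_mul_sub, q_mul_neg, s_sq', q_neg_zero, q_zero_sub, q_neg_neg]
  rw [s_bc' k]
  simp only [fk_sq, q_mul_zero, q_neg_zero, q_zero_sub, q_neg_neg]

lemma s_bac' (x : FK3 k) :
    xg k 1 * (xg k 0 * (xg k 2 * x)) = xg k 2 * (xg k 0 * (xg k 1 * x)) := by
  have h := congrArg (fun y => y * x) (s_bac k)
  simpa only [mul_assoc] using h

end Lemmas

section Span
variable (k : Type) [Field k]

/-- The candidate basis family. -/
def bs (k : Type) [Field k] : Fin 12 → FK3 k :=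
  ![1, xg k 0, xg k 1, xg k 2,
    xg k 2 * xg k 0, xg k 0 * xg k 2, xg k 1 * xg k 0, xg k 0 * xg k 1,
    xg k 0 * xg k 1 * xg k 0, xg k 2 * xg k 0 * xg k 2,
    xg k 2 * xg k 0 * xg k 1, xg k 2 * xg k 0 * xg k 1 * xg k 0]

/-- The span of the candidate basis. -/
def SP (k : Type) [Field k] : Submodule k (FK3 k) :=
  Submodule.span k (Set.range (bs k))

lemma bs_mem (j : Fin 12) : bs k j ∈ SP k := Submodule.subset_span ⟨j, rfl⟩

lemma hm0 : (1 : FK3 k) ∈ SP k := by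
  have h := bs_mem k 0
  rwa [show bs k 0 = (1 : FK3 k) from by rw [show bs k 0 = (1 : FK3 k) from rfl]; try simp only [mul_assoc]] at h

lemma hm1 : xg k 0 ∈ SP k := by
  have h := bs_mem k 1
  rwa [show bs k 1 = xg k 0 from by rw [show bs k 1 = xg k 0 from rfl]; try simp only [mul_assoc]] at h

lemma hm2 : xg k 1 ∈ SP k := by
  have h := bs_mem k 2
  rwa [show bs k 2 = xg k 1 from by rw [show bs k 2 = xg k 1 from rfl]; try simp only [mul_assoc]] at h

lemma hm3 : xg k 2 ∈ SP k := by
  have h := bs_mem k 3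
  rwa [show bs k 3 = xg k 2 from by rw [show bs k 3 = xg k 2 from rfl]; try simp only [mul_assoc]] at h

lemma hm4 : xg k 2 * xg k 0 ∈ SP k := by
  have h := bs_mem k 4
  rwa [show bs k 4 = xg k 2 * xg k 0 from by rw [show bs k 4 = xg k 2 * xg k 0 from rfl]; try simp only [mul_assoc]] at h

lemma hm5 : xg k 0 * xg k 2 ∈ SP k := by
  have h := bs_mem k 5
  rwa [show bs k 5 = xg k 0 * xg k 2 from by rw [show bs k 5 = xg k 0 * xg k 2 from rfl]; try simp only [mul_assoc]] at h

lemma hm6 : xg k 1 * xg k 0 ∈ SP k := by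
  have h := bs_mem k 6
  rwa [show bs k 6 = xg k 1 * xg k 0 from by rw [show bs k 6 = xg k 1 * xg k 0 from rfl]; try simp only [mul_assoc]] at h

lemma hm7 : xg k 0 * xg k 1 ∈ SP k := by
  have h := bs_mem k 7
  rwa [show bs k 7 = xg k 0 * xg k 1 from by rw [show bs k 7 = xg k 0 * xg k 1 from rfl]; try simp only [mul_assoc]] at h

lemma hm8 : xg k 0 * (xg k 1 * xg k 0) ∈ SP k := by
  have h := bs_mem k 8
  rwa [show bs k 8 = xg k 0 * (xg k 1 * xg k 0) from by rw [show bs k 8 = xg k 0 * xg k 1 * xg k 0 from rfl]; try simp only [mul_assoc]] at h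

lemma hm9 : xg k 2 * (xg k 0 * xg k 2) ∈ SP k := by
  have h := bs_mem k 9
  rwa [show bs k 9 = xg k 2 * (xg k 0 * xg k 2) from by rw [show bs k 9 = xg k 2 * xg k 0 * xg k 2 from rfl]; try simp only [mul_assoc]] at h

lemma hm10 : xg k 2 * (xg k 0 * xg k 1) ∈ SP k := by
  have h := bs_mem k 10
  rwa [show bs k 10 = xg k 2 * (xg k 0 * xg k 1) from by rw [show bs k 10 = xg k 2 * xg k 0 * xg k 1 from rfl]; try simp only [mul_assoc]] at h

lemma hm11 : xg k 2 * (xg k 0 * (xg k 1 * xg k 0)) ∈ SP k := by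
  have h := bs_mem k 11
  rwa [show bs k 11 = xg k 2 * (xg k 0 * (xg k 1 * xg k 0)) from by rw [show bs k 11 = xg k 2 * xg k 0 * xg k 1 * xg k 0 from rfl]; try simp only [mul_assoc]] at h

lemma t_0_0 : bs k 0 * xg k 0 ∈ SP k := by
  show (1 : FK3 k) * xg k 0 ∈ SP k
  try simp only [fk_sq, s_sq', s_bc, s_bc', s_cb, s_cb', s_aca, s_aca', s_bab, s_bab', s_bac, s_bac', mul_assoc, q_neg_mul, q_mul_neg, q_neg_neg, q_neg_zero, q_mul_zero, q_zero_mul, q_mul_one, q_one_mul, q_mul_add, q_add_mul, q_mul_sub, q_sub_mul, q_sub_zero, q_zero_sub, q_add_zero, q_zero_add]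
  solve_by_elim [Submodule.add_mem, Submodule.neg_mem, Submodule.sub_mem, Submodule.zero_mem, hm0 k, hm1 k, hm2 k, hm3 k, hm4 k, hm5 k, hm6 k, hm7 k, hm8 k, hm9 k, hm10 k, hm11 k]

lemma t_0_1 : bs k 0 * xg k 1 ∈ SP k := by
  show (1 : FK3 k) * xg k 1 ∈ SP k
  try simp only [fk_sq, s_sq', s_bc, s_bc', s_cb, s_cb', s_aca, s_aca', s_bab, s_bab', s_bac, s_bac', mul_assoc, q_neg_mul, q_mul_neg, q_neg_neg, q_neg_zero, q_mul_zero, q_zero_mul, q_mul_one, q_one_mul, q_mul_add, q_add_mul, q_mul_sub, q_sub_mul, q_sub_zero, q_zero_sub, q_add_zero, q_zero_add]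
  solve_by_elim [Submodule.add_mem, Submodule.neg_mem, Submodule.sub_mem, Submodule.zero_mem, hm0 k, hm1 k, hm2 k, hm3 k, hm4 k, hm5 k, hm6 k, hm7 k, hm8 k, hm9 k, hm10 k, hm11 k]

lemma t_0_2 : bs k 0 * xg k 2 ∈ SP k := by
  show (1 : FK3 k) * xg k 2 ∈ SP k
  try simp only [fk_sq, s_sq', s_bc, s_bc', s_cb, s_cb', s_aca, s_aca', s_bab, s_bab', s_bac, s_bac', mul_assoc, q_neg_mul, q_mul_neg, q_neg_neg, q_neg_zero, q_mul_zero, q_zero_mul, q_mul_one, q_one_mul, q_mul_add, q_add_mul, q_mul_sub, q_sub_mul, q_sub_zero, q_zero_sub, q_add_zero, q_zero_add]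
  solve_by_elim [Submodule.add_mem, Submodule.neg_mem, Submodule.sub_mem, Submodule.zero_mem, hm0 k, hm1 k, hm2 k, hm3 k, hm4 k, hm5 k, hm6 k, hm7 k, hm8 k, hm9 k, hm10 k, hm11 k]

lemma t_1_0 : bs k 1 * xg k 0 ∈ SP k := by
  show xg k 0 * xg k 0 ∈ SP k
  try simp only [fk_sq, s_sq', s_bc, s_bc', s_cb, s_cb', s_aca, s_aca', s_bab, s_bab', s_bac, s_bac', mul_assoc, q_neg_mul, q_mul_neg, q_neg_neg, q_neg_zero, q_mul_zero, q_zero_mul, q_mul_one, q_one_mul, q_mul_add, q_add_mul, q_mul_sub, q_sub_mul, q_sub_zero, q_zero_sub, q_add_zero, q_zero_add]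
  solve_by_elim [Submodule.add_mem, Submodule.neg_mem, Submodule.sub_mem, Submodule.zero_mem, hm0 k, hm1 k, hm2 k, hm3 k, hm4 k, hm5 k, hm6 k, hm7 k, hm8 k, hm9 k, hm10 k, hm11 k]

lemma t_1_1 : bs k 1 * xg k 1 ∈ SP k := by
  show xg k 0 * xg k 1 ∈ SP k
  try simp only [fk_sq, s_sq', s_bc, s_bc', s_cb, s_cb', s_aca, s_aca', s_bab, s_bab', s_bac, s_bac', mul_assoc, q_neg_mul, q_mul_neg, q_neg_neg, q_neg_zero, q_mul_zero, q_zero_mul, q_mul_one, q_one_mul, q_mul_add, q_add_mul, q_mul_sub, q_sub_mul, q_sub_zero, q_zero_sub, q_add_zero, q_zero_add]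
  solve_by_elim [Submodule.add_mem, Submodule.neg_mem, Submodule.sub_mem, Submodule.zero_mem, hm0 k, hm1 k, hm2 k, hm3 k, hm4 k, hm5 k, hm6 k, hm7 k, hm8 k, hm9 k, hm10 k, hm11 k]

lemma t_1_2 : bs k 1 * xg k 2 ∈ SP k := by
  show xg k 0 * xg k 2 ∈ SP k
  try simp only [fk_sq, s_sq', s_bc, s_bc', s_cb, s_cb', s_aca, s_aca', s_bab, s_bab', s_bac, s_bac', mul_assoc, q_neg_mul, q_mul_neg, q_neg_neg, q_neg_zero, q_mul_zero, q_zero_mul, q_mul_one, q_one_mul, q_mul_add, q_add_mul, q_mul_sub, q_sub_mul, q_sub_zero, q_zero_sub, q_add_zero, q_zero_add]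
  solve_by_elim [Submodule.add_mem, Submodule.neg_mem, Submodule.sub_mem, Submodule.zero_mem, hm0 k, hm1 k, hm2 k, hm3 k, hm4 k, hm5 k, hm6 k, hm7 k, hm8 k, hm9 k, hm10 k, hm11 k]

lemma t_2_0 : bs k 2 * xg k 0 ∈ SP k := by
  show xg k 1 * xg k 0 ∈ SP k
  try simp only [fk_sq, s_sq', s_bc, s_bc', s_cb, s_cb', s_aca, s_aca', s_bab, s_bab', s_bac, s_bac', mul_assoc, q_neg_mul, q_mul_neg, q_neg_neg, q_neg_zero, q_mul_zero, q_zero_mul, q_mul_one, q_one_mul, q_mul_add, q_add_mul, q_mul_sub, q_sub_mul, q_sub_zero, q_zero_sub, q_add_zero, q_zero_add]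
  solve_by_elim [Submodule.add_mem, Submodule.neg_mem, Submodule.sub_mem, Submodule.zero_mem, hm0 k, hm1 k, hm2 k, hm3 k, hm4 k, hm5 k, hm6 k, hm7 k, hm8 k, hm9 k, hm10 k, hm11 k]

lemma t_2_1 : bs k 2 * xg k 1 ∈ SP k := by
  show xg k 1 * xg k 1 ∈ SP k
  try simp only [fk_sq, s_sq', s_bc, s_bc', s_cb, s_cb', s_aca, s_aca', s_bab, s_bab', s_bac, s_bac', mul_assoc, q_neg_mul, q_mul_neg, q_neg_neg, q_neg_zero, q_mul_zero, q_zero_mul, q_mul_one, q_one_mul, q_mul_add, q_add_mul, q_mul_sub, q_sub_mul, q_sub_zero, q_zero_sub, q_add_zero, q_zero_add]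
  solve_by_elim [Submodule.add_mem, Submodule.neg_mem, Submodule.sub_mem, Submodule.zero_mem, hm0 k, hm1 k, hm2 k, hm3 k, hm4 k, hm5 k, hm6 k, hm7 k, hm8 k, hm9 k, hm10 k, hm11 k]

lemma t_2_2 : bs k 2 * xg k 2 ∈ SP k := by
  show xg k 1 * xg k 2 ∈ SP k
  try simp only [fk_sq, s_sq', s_bc, s_bc', s_cb, s_cb', s_aca, s_aca', s_bab, s_bab', s_bac, s_bac', mul_assoc, q_neg_mul, q_mul_neg, q_neg_neg, q_neg_zero, q_mul_zero, q_zero_mul, q_mul_one, q_one_mul, q_mul_add, q_add_mul, q_mul_sub, q_sub_mul, q_sub_zero, q_zero_sub, q_add_zero, q_zero_add]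
  solve_by_elim [Submodule.add_mem, Submodule.neg_mem, Submodule.sub_mem, Submodule.zero_mem, hm0 k, hm1 k, hm2 k, hm3 k, hm4 k, hm5 k, hm6 k, hm7 k, hm8 k, hm9 k, hm10 k, hm11 k]

lemma t_3_0 : bs k 3 * xg k 0 ∈ SP k := by
  show xg k 2 * xg k 0 ∈ SP k
  try simp only [fk_sq, s_sq', s_bc, s_bc', s_cb, s_cb', s_aca, s_aca', s_bab, s_bab', s_bac, s_bac', mul_assoc, q_neg_mul, q_mul_neg, q_neg_neg, q_neg_zero, q_mul_zero, q_zero_mul, q_mul_one, q_one_mul, q_mul_add, q_add_mul, q_mul_sub, q_sub_mul, q_sub_zero, q_zero_sub, q_add_zero, q_zero_add]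
  solve_by_elim [Submodule.add_mem, Submodule.neg_mem, Submodule.sub_mem, Submodule.zero_mem, hm0 k, hm1 k, hm2 k, hm3 k, hm4 k, hm5 k, hm6 k, hm7 k, hm8 k, hm9 k, hm10 k, hm11 k]

lemma t_3_1 : bs k 3 * xg k 1 ∈ SP k := by
  show xg k 2 * xg k 1 ∈ SP k
  try simp only [fk_sq, s_sq', s_bc, s_bc', s_cb, s_cb', s_aca, s_aca', s_bab, s_bab', s_bac, s_bac', mul_assoc, q_neg_mul, q_mul_neg, q_neg_neg, q_neg_zero, q_mul_zero, q_zero_mul, q_mul_one, q_one_mul, q_mul_add, q_add_mul, q_mul_sub, q_sub_mul, q_sub_zero, q_zero_sub, q_add_zero, q_zero_add]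
  solve_by_elim [Submodule.add_mem, Submodule.neg_mem, Submodule.sub_mem, Submodule.zero_mem, hm0 k, hm1 k, hm2 k, hm3 k, hm4 k, hm5 k, hm6 k, hm7 k, hm8 k, hm9 k, hm10 k, hm11 k]

lemma t_3_2 : bs k 3 * xg k 2 ∈ SP k := by
  show xg k 2 * xg k 2 ∈ SP k
  try simp only [fk_sq, s_sq', s_bc, s_bc', s_cb, s_cb', s_aca, s_aca', s_bab, s_bab', s_bac, s_bac', mul_assoc, q_neg_mul, q_mul_neg, q_neg_neg, q_neg_zero, q_mul_zero, q_zero_mul, q_mul_one, q_one_mul, q_mul_add, q_add_mul, q_mul_sub, q_sub_mul, q_sub_zero, q_zero_sub, q_add_zero, q_zero_add]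
  solve_by_elim [Submodule.add_mem, Submodule.neg_mem, Submodule.sub_mem, Submodule.zero_mem, hm0 k, hm1 k, hm2 k, hm3 k, hm4 k, hm5 k, hm6 k, hm7 k, hm8 k, hm9 k, hm10 k, hm11 k]

lemma t_4_0 : bs k 4 * xg k 0 ∈ SP k := by
  show xg k 2 * xg k 0 * xg k 0 ∈ SP k
  try simp only [fk_sq, s_sq', s_bc, s_bc', s_cb, s_cb', s_aca, s_aca', s_bab, s_bab', s_bac, s_bac', mul_assoc, q_neg_mul, q_mul_neg, q_neg_neg, q_neg_zero, q_mul_zero, q_zero_mul, q_mul_one, q_one_mul, q_mul_add, q_add_mul, q_mul_sub, q_sub_mul, q_sub_zero, q_zero_sub, q_add_zero, q_zero_add]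
  solve_by_elim [Submodule.add_mem, Submodule.neg_mem, Submodule.sub_mem, Submodule.zero_mem, hm0 k, hm1 k, hm2 k, hm3 k, hm4 k, hm5 k, hm6 k, hm7 k, hm8 k, hm9 k, hm10 k, hm11 k]

lemma t_4_1 : bs k 4 * xg k 1 ∈ SP k := by
  show xg k 2 * xg k 0 * xg k 1 ∈ SP k
  try simp only [fk_sq, s_sq', s_bc, s_bc', s_cb, s_cb', s_aca, s_aca', s_bab, s_bab', s_bac, s_bac', mul_assoc, q_neg_mul, q_mul_neg, q_neg_neg, q_neg_zero, q_mul_zero, q_zero_mul, q_mul_one, q_one_mul, q_mul_add, q_add_mul, q_mul_sub, q_sub_mul, q_sub_zero, q_zero_sub, q_add_zero, q_zero_add]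
  solve_by_elim [Submodule.add_mem, Submodule.neg_mem, Submodule.sub_mem, Submodule.zero_mem, hm0 k, hm1 k, hm2 k, hm3 k, hm4 k, hm5 k, hm6 k, hm7 k, hm8 k, hm9 k, hm10 k, hm11 k]

lemma t_4_2 : bs k 4 * xg k 2 ∈ SP k := by
  show xg k 2 * xg k 0 * xg k 2 ∈ SP k
  try simp only [fk_sq, s_sq', s_bc, s_bc', s_cb, s_cb', s_aca, s_aca', s_bab, s_bab', s_bac, s_bac', mul_assoc, q_neg_mul, q_mul_neg, q_neg_neg, q_neg_zero, q_mul_zero, q_zero_mul, q_mul_one, q_one_mul, q_mul_add, q_add_mul, q_mul_sub, q_sub_mul, q_sub_zero, q_zero_sub, q_add_zero, q_zero_add]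
  solve_by_elim [Submodule.add_mem, Submodule.neg_mem, Submodule.sub_mem, Submodule.zero_mem, hm0 k, hm1 k, hm2 k, hm3 k, hm4 k, hm5 k, hm6 k, hm7 k, hm8 k, hm9 k, hm10 k, hm11 k]

lemma t_5_0 : bs k 5 * xg k 0 ∈ SP k := by
  show xg k 0 * xg k 2 * xg k 0 ∈ SP k
  try simp only [fk_sq, s_sq', s_bc, s_bc', s_cb, s_cb', s_aca, s_aca', s_bab, s_bab', s_bac, s_bac', mul_assoc, q_neg_mul, q_mul_neg, q_neg_neg, q_neg_zero, q_mul_zero, q_zero_mul, q_mul_one, q_one_mul, q_mul_add, q_add_mul, q_mul_sub, q_sub_mul, q_sub_zero, q_zero_sub, q_add_zero, q_zero_add]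
  solve_by_elim [Submodule.add_mem, Submodule.neg_mem, Submodule.sub_mem, Submodule.zero_mem, hm0 k, hm1 k, hm2 k, hm3 k, hm4 k, hm5 k, hm6 k, hm7 k, hm8 k, hm9 k, hm10 k, hm11 k]

lemma t_5_1 : bs k 5 * xg k 1 ∈ SP k := by
  show xg k 0 * xg k 2 * xg k 1 ∈ SP k
  try simp only [fk_sq, s_sq', s_bc, s_bc', s_cb, s_cb', s_aca, s_aca', s_bab, s_bab', s_bac, s_bac', mul_assoc, q_neg_mul, q_mul_neg, q_neg_neg, q_neg_zero, q_mul_zero, q_zero_mul, q_mul_one, q_one_mul, q_mul_add, q_add_mul, q_mul_sub, q_sub_mul, q_sub_zero, q_zero_sub, q_add_zero, q_zero_add]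
  solve_by_elim [Submodule.add_mem, Submodule.neg_mem, Submodule.sub_mem, Submodule.zero_mem, hm0 k, hm1 k, hm2 k, hm3 k, hm4 k, hm5 k, hm6 k, hm7 k, hm8 k, hm9 k, hm10 k, hm11 k]

lemma t_5_2 : bs k 5 * xg k 2 ∈ SP k := by
  show xg k 0 * xg k 2 * xg k 2 ∈ SP k
  try simp only [fk_sq, s_sq', s_bc, s_bc', s_cb, s_cb', s_aca, s_aca', s_bab, s_bab', s_bac, s_bac', mul_assoc, q_neg_mul, q_mul_neg, q_neg_neg, q_neg_zero, q_mul_zero, q_zero_mul, q_mul_one, q_one_mul, q_mul_add, q_add_mul, q_mul_sub, q_sub_mul, q_sub_zero, q_zero_sub, q_add_zero, q_zero_add]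
  solve_by_elim [Submodule.add_mem, Submodule.neg_mem, Submodule.sub_mem, Submodule.zero_mem, hm0 k, hm1 k, hm2 k, hm3 k, hm4 k, hm5 k, hm6 k, hm7 k, hm8 k, hm9 k, hm10 k, hm11 k]

lemma t_6_0 : bs k 6 * xg k 0 ∈ SP k := by
  show xg k 1 * xg k 0 * xg k 0 ∈ SP k
  try simp only [fk_sq, s_sq', s_bc, s_bc', s_cb, s_cb', s_aca, s_aca', s_bab, s_bab', s_bac, s_bac', mul_assoc, q_neg_mul, q_mul_neg, q_neg_neg, q_neg_zero, q_mul_zero, q_zero_mul, q_mul_one, q_one_mul, q_mul_add, q_add_mul, q_mul_sub, q_sub_mul, q_sub_zero, q_zero_sub, q_add_zero, q_zero_add]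
  solve_by_elim [Submodule.add_mem, Submodule.neg_mem, Submodule.sub_mem, Submodule.zero_mem, hm0 k, hm1 k, hm2 k, hm3 k, hm4 k, hm5 k, hm6 k, hm7 k, hm8 k, hm9 k, hm10 k, hm11 k]

lemma t_6_1 : bs k 6 * xg k 1 ∈ SP k := by
  show xg k 1 * xg k 0 * xg k 1 ∈ SP k
  try simp only [fk_sq, s_sq', s_bc, s_bc', s_cb, s_cb', s_aca, s_aca', s_bab, s_bab', s_bac, s_bac', mul_assoc, q_neg_mul, q_mul_neg, q_neg_neg, q_neg_zero, q_mul_zero, q_zero_mul, q_mul_one, q_one_mul, q_mul_add, q_add_mul, q_mul_sub, q_sub_mul, q_sub_zero, q_zero_sub, q_add_zero, q_zero_add]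
  solve_by_elim [Submodule.add_mem, Submodule.neg_mem, Submodule.sub_mem, Submodule.zero_mem, hm0 k, hm1 k, hm2 k, hm3 k, hm4 k, hm5 k, hm6 k, hm7 k, hm8 k, hm9 k, hm10 k, hm11 k]

lemma t_6_2 : bs k 6 * xg k 2 ∈ SP k := by
  show xg k 1 * xg k 0 * xg k 2 ∈ SP k
  try simp only [fk_sq, s_sq', s_bc, s_bc', s_cb, s_cb', s_aca, s_aca', s_bab, s_bab', s_bac, s_bac', mul_assoc, q_neg_mul, q_mul_neg, q_neg_neg, q_neg_zero, q_mul_zero, q_zero_mul, q_mul_one, q_one_mul, q_mul_add, q_add_mul, q_mul_sub, q_sub_mul, q_sub_zero, q_zero_sub, q_add_zero, q_zero_add]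
  solve_by_elim [Submodule.add_mem, Submodule.neg_mem, Submodule.sub_mem, Submodule.zero_mem, hm0 k, hm1 k, hm2 k, hm3 k, hm4 k, hm5 k, hm6 k, hm7 k, hm8 k, hm9 k, hm10 k, hm11 k]

lemma t_7_0 : bs k 7 * xg k 0 ∈ SP k := by
  show xg k 0 * xg k 1 * xg k 0 ∈ SP k
  try simp only [fk_sq, s_sq', s_bc, s_bc', s_cb, s_cb', s_aca, s_aca', s_bab, s_bab', s_bac, s_bac', mul_assoc, q_neg_mul, q_mul_neg, q_neg_neg, q_neg_zero, q_mul_zero, q_zero_mul, q_mul_one, q_one_mul, q_mul_add, q_add_mul, q_mul_sub, q_sub_mul, q_sub_zero, q_zero_sub, q_add_zero, q_zero_add]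
  solve_by_elim [Submodule.add_mem, Submodule.neg_mem, Submodule.sub_mem, Submodule.zero_mem, hm0 k, hm1 k, hm2 k, hm3 k, hm4 k, hm5 k, hm6 k, hm7 k, hm8 k, hm9 k, hm10 k, hm11 k]

lemma t_7_1 : bs k 7 * xg k 1 ∈ SP k := by
  show xg k 0 * xg k 1 * xg k 1 ∈ SP k
  try simp only [fk_sq, s_sq', s_bc, s_bc', s_cb, s_cb', s_aca, s_aca', s_bab, s_bab', s_bac, s_bac', mul_assoc, q_neg_mul, q_mul_neg, q_neg_neg, q_neg_zero, q_mul_zero, q_zero_mul, q_mul_one, q_one_mul, q_mul_add, q_add_mul, q_mul_sub, q_sub_mul, q_sub_zero, q_zero_sub, q_add_zero, q_zero_add]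
  solve_by_elim [Submodule.add_mem, Submodule.neg_mem, Submodule.sub_mem, Submodule.zero_mem, hm0 k, hm1 k, hm2 k, hm3 k, hm4 k, hm5 k, hm6 k, hm7 k, hm8 k, hm9 k, hm10 k, hm11 k]

lemma t_7_2 : bs k 7 * xg k 2 ∈ SP k := by
  show xg k 0 * xg k 1 * xg k 2 ∈ SP k
  try simp only [fk_sq, s_sq', s_bc, s_bc', s_cb, s_cb', s_aca, s_aca', s_bab, s_bab', s_bac, s_bac', mul_assoc, q_neg_mul, q_mul_neg, q_neg_neg, q_neg_zero, q_mul_zero, q_zero_mul, q_mul_one, q_one_mul, q_mul_add, q_add_mul, q_mul_sub, q_sub_mul, q_sub_zero, q_zero_sub, q_add_zero, q_zero_add]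
  solve_by_elim [Submodule.add_mem, Submodule.neg_mem, Submodule.sub_mem, Submodule.zero_mem, hm0 k, hm1 k, hm2 k, hm3 k, hm4 k, hm5 k, hm6 k, hm7 k, hm8 k, hm9 k, hm10 k, hm11 k]

lemma t_8_0 : bs k 8 * xg k 0 ∈ SP k := by
  show xg k 0 * xg k 1 * xg k 0 * xg k 0 ∈ SP k
  try simp only [fk_sq, s_sq', s_bc, s_bc', s_cb, s_cb', s_aca, s_aca', s_bab, s_bab', s_bac, s_bac', mul_assoc, q_neg_mul, q_mul_neg, q_neg_neg, q_neg_zero, q_mul_zero, q_zero_mul, q_mul_one, q_one_mul, q_mul_add, q_add_mul, q_mul_sub, q_sub_mul, q_sub_zero, q_zero_sub, q_add_zero, q_zero_add]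
  solve_by_elim [Submodule.add_mem, Submodule.neg_mem, Submodule.sub_mem, Submodule.zero_mem, hm0 k, hm1 k, hm2 k, hm3 k, hm4 k, hm5 k, hm6 k, hm7 k, hm8 k, hm9 k, hm10 k, hm11 k]

lemma t_8_1 : bs k 8 * xg k 1 ∈ SP k := by
  show xg k 0 * xg k 1 * xg k 0 * xg k 1 ∈ SP k
  try simp only [fk_sq, s_sq', s_bc, s_bc', s_cb, s_cb', s_aca, s_aca', s_bab, s_bab', s_bac, s_bac', mul_assoc, q_neg_mul, q_mul_neg, q_neg_neg, q_neg_zero, q_mul_zero, q_zero_mul, q_mul_one, q_one_mul, q_mul_add, q_add_mul, q_mul_sub, q_sub_mul, q_sub_zero, q_zero_sub, q_add_zero, q_zero_add]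
  solve_by_elim [Submodule.add_mem, Submodule.neg_mem, Submodule.sub_mem, Submodule.zero_mem, hm0 k, hm1 k, hm2 k, hm3 k, hm4 k, hm5 k, hm6 k, hm7 k, hm8 k, hm9 k, hm10 k, hm11 k]

lemma t_8_2 : bs k 8 * xg k 2 ∈ SP k := by
  show xg k 0 * xg k 1 * xg k 0 * xg k 2 ∈ SP k
  try simp only [fk_sq, s_sq', s_bc, s_bc', s_cb, s_cb', s_aca, s_aca', s_bab, s_bab', s_bac, s_bac', mul_assoc, q_neg_mul, q_mul_neg, q_neg_neg, q_neg_zero, q_mul_zero, q_zero_mul, q_mul_one, q_one_mul, q_mul_add, q_add_mul, q_mul_sub, q_sub_mul, q_sub_zero, q_zero_sub, q_add_zero, q_zero_add]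
  solve_by_elim [Submodule.add_mem, Submodule.neg_mem, Submodule.sub_mem, Submodule.zero_mem, hm0 k, hm1 k, hm2 k, hm3 k, hm4 k, hm5 k, hm6 k, hm7 k, hm8 k, hm9 k, hm10 k, hm11 k]

lemma t_9_0 : bs k 9 * xg k 0 ∈ SP k := by
  show xg k 2 * xg k 0 * xg k 2 * xg k 0 ∈ SP k
  try simp only [fk_sq, s_sq', s_bc, s_bc', s_cb, s_cb', s_aca, s_aca', s_bab, s_bab', s_bac, s_bac', mul_assoc, q_neg_mul, q_mul_neg, q_neg_neg, q_neg_zero, q_mul_zero, q_zero_mul, q_mul_one, q_one_mul, q_mul_add, q_add_mul, q_mul_sub, q_sub_mul, q_sub_zero, q_zero_sub, q_add_zero, q_zero_add]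
  solve_by_elim [Submodule.add_mem, Submodule.neg_mem, Submodule.sub_mem, Submodule.zero_mem, hm0 k, hm1 k, hm2 k, hm3 k, hm4 k, hm5 k, hm6 k, hm7 k, hm8 k, hm9 k, hm10 k, hm11 k]

lemma t_9_1 : bs k 9 * xg k 1 ∈ SP k := by
  show xg k 2 * xg k 0 * xg k 2 * xg k 1 ∈ SP k
  try simp only [fk_sq, s_sq', s_bc, s_bc', s_cb, s_cb', s_aca, s_aca', s_bab, s_bab', s_bac, s_bac', mul_assoc, q_neg_mul, q_mul_neg, q_neg_neg, q_neg_zero, q_mul_zero, q_zero_mul, q_mul_one, q_one_mul, q_mul_add, q_add_mul, q_mul_sub, q_sub_mul, q_sub_zero, q_zero_sub, q_add_zero, q_zero_add]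
  solve_by_elim [Submodule.add_mem, Submodule.neg_mem, Submodule.sub_mem, Submodule.zero_mem, hm0 k, hm1 k, hm2 k, hm3 k, hm4 k, hm5 k, hm6 k, hm7 k, hm8 k, hm9 k, hm10 k, hm11 k]

lemma t_9_2 : bs k 9 * xg k 2 ∈ SP k := by
  show xg k 2 * xg k 0 * xg k 2 * xg k 2 ∈ SP k
  try simp only [fk_sq, s_sq', s_bc, s_bc', s_cb, s_cb', s_aca, s_aca', s_bab, s_bab', s_bac, s_bac', mul_assoc, q_neg_mul, q_mul_neg, q_neg_neg, q_neg_zero, q_mul_zero, q_zero_mul, q_mul_one, q_one_mul, q_mul_add, q_add_mul, q_mul_sub, q_sub_mul, q_sub_zero, q_zero_sub, q_add_zero, q_zero_add]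
  solve_by_elim [Submodule.add_mem, Submodule.neg_mem, Submodule.sub_mem, Submodule.zero_mem, hm0 k, hm1 k, hm2 k, hm3 k, hm4 k, hm5 k, hm6 k, hm7 k, hm8 k, hm9 k, hm10 k, hm11 k]

lemma t_10_0 : bs k 10 * xg k 0 ∈ SP k := by
  show xg k 2 * xg k 0 * xg k 1 * xg k 0 ∈ SP k
  try simp only [fk_sq, s_sq', s_bc, s_bc', s_cb, s_cb', s_aca, s_aca', s_bab, s_bab', s_bac, s_bac', mul_assoc, q_neg_mul, q_mul_neg, q_neg_neg, q_neg_zero, q_mul_zero, q_zero_mul, q_mul_one, q_one_mul, q_mul_add, q_add_mul, q_mul_sub, q_sub_mul, q_sub_zero, q_zero_sub, q_add_zero, q_zero_add]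
  solve_by_elim [Submodule.add_mem, Submodule.neg_mem, Submodule.sub_mem, Submodule.zero_mem, hm0 k, hm1 k, hm2 k, hm3 k, hm4 k, hm5 k, hm6 k, hm7 k, hm8 k, hm9 k, hm10 k, hm11 k]

lemma t_10_1 : bs k 10 * xg k 1 ∈ SP k := by
  show xg k 2 * xg k 0 * xg k 1 * xg k 1 ∈ SP k
  try simp only [fk_sq, s_sq', s_bc, s_bc', s_cb, s_cb', s_aca, s_aca', s_bab, s_bab', s_bac, s_bac', mul_assoc, q_neg_mul, q_mul_neg, q_neg_neg, q_neg_zero, q_mul_zero, q_zero_mul, q_mul_one, q_one_mul, q_mul_add, q_add_mul, q_mul_sub, q_sub_mul, q_sub_zero, q_zero_sub, q_add_zero, q_zero_add]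
  solve_by_elim [Submodule.add_mem, Submodule.neg_mem, Submodule.sub_mem, Submodule.zero_mem, hm0 k, hm1 k, hm2 k, hm3 k, hm4 k, hm5 k, hm6 k, hm7 k, hm8 k, hm9 k, hm10 k, hm11 k]

lemma t_10_2 : bs k 10 * xg k 2 ∈ SP k := by
  show xg k 2 * xg k 0 * xg k 1 * xg k 2 ∈ SP k
  try simp only [fk_sq, s_sq', s_bc, s_bc', s_cb, s_cb', s_aca, s_aca', s_bab, s_bab', s_bac, s_bac', mul_assoc, q_neg_mul, q_mul_neg, q_neg_neg, q_neg_zero, q_mul_zero, q_zero_mul, q_mul_one, q_one_mul, q_mul_add, q_add_mul, q_mul_sub, q_sub_mul, q_sub_zero, q_zero_sub, q_add_zero, q_zero_add]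
  solve_by_elim [Submodule.add_mem, Submodule.neg_mem, Submodule.sub_mem, Submodule.zero_mem, hm0 k, hm1 k, hm2 k, hm3 k, hm4 k, hm5 k, hm6 k, hm7 k, hm8 k, hm9 k, hm10 k, hm11 k]

lemma t_11_0 : bs k 11 * xg k 0 ∈ SP k := by
  show xg k 2 * xg k 0 * xg k 1 * xg k 0 * xg k 0 ∈ SP k
  try simp only [fk_sq, s_sq', s_bc, s_bc', s_cb, s_cb', s_aca, s_aca', s_bab, s_bab', s_bac, s_bac', mul_assoc, q_neg_mul, q_mul_neg, q_neg_neg, q_neg_zero, q_mul_zero, q_zero_mul, q_mul_one, q_one_mul, q_mul_add, q_add_mul, q_mul_sub, q_sub_mul, q_sub_zero, q_zero_sub, q_add_zero, q_zero_add]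
  solve_by_elim [Submodule.add_mem, Submodule.neg_mem, Submodule.sub_mem, Submodule.zero_mem, hm0 k, hm1 k, hm2 k, hm3 k, hm4 k, hm5 k, hm6 k, hm7 k, hm8 k, hm9 k, hm10 k, hm11 k]

lemma t_11_1 : bs k 11 * xg k 1 ∈ SP k := by
  show xg k 2 * xg k 0 * xg k 1 * xg k 0 * xg k 1 ∈ SP k
  try simp only [fk_sq, s_sq', s_bc, s_bc', s_cb, s_cb', s_aca, s_aca', s_bab, s_bab', s_bac, s_bac', mul_assoc, q_neg_mul, q_mul_neg, q_neg_neg, q_neg_zero, q_mul_zero, q_zero_mul, q_mul_one, q_one_mul, q_mul_add, q_add_mul, q_mul_sub, q_sub_mul, q_sub_zero, q_zero_sub, q_add_zero, q_zero_add]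
  solve_by_elim [Submodule.add_mem, Submodule.neg_mem, Submodule.sub_mem, Submodule.zero_mem, hm0 k, hm1 k, hm2 k, hm3 k, hm4 k, hm5 k, hm6 k, hm7 k, hm8 k, hm9 k, hm10 k, hm11 k]

lemma t_11_2 : bs k 11 * xg k 2 ∈ SP k := by
  show xg k 2 * xg k 0 * xg k 1 * xg k 0 * xg k 2 ∈ SP k
  try simp only [fk_sq, s_sq', s_bc, s_bc', s_cb, s_cb', s_aca, s_aca', s_bab, s_bab', s_bac, s_bac', mul_assoc, q_neg_mul, q_mul_neg, q_neg_neg, q_neg_zero, q_mul_zero, q_zero_mul, q_mul_one, q_one_mul, q_mul_add, q_add_mul, q_mul_sub, q_sub_mul, q_sub_zero, q_zero_sub, q_add_zero, q_zero_add]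
  solve_by_elim [Submodule.add_mem, Submodule.neg_mem, Submodule.sub_mem, Submodule.zero_mem, hm0 k, hm1 k, hm2 k, hm3 k, hm4 k, hm5 k, hm6 k, hm7 k, hm8 k, hm9 k, hm10 k, hm11 k]

lemma right_mul_mem (j : Fin 12) (i : Fin 3) : bs k j * xg k i ∈ SP k := by
  fin_cases j <;> fin_cases i
  exacts [t_0_0 k, t_0_1 k, t_0_2 k, t_1_0 k, t_1_1 k, t_1_2 k, t_2_0 k, t_2_1 k, t_2_2 k, t_3_0 k, t_3_1 k, t_3_2 k, t_4_0 k, t_4_1 k, t_4_2 k, t_5_0 k, t_5_1 k, t_5_2 k, t_6_0 k, t_6_1 k, t_6_2 k, t_7_0 k, t_7_1 k, t_7_2 k, t_8_0 k, t_8_1 k, t_8_2 k, t_9_0 k, t_9_1 k, t_9_2 k, t_10_0 k, t_10_1 k, t_10_2 k, t_11_0 k, t_11_1 k, t_11_2 k]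

end Span

section Rep

/-- Integer matrices of the left regular representation of `FK₃` on the basis. -/
def Mz : Fin 3 → Matrix (Fin 12) (Fin 12) ℤ
  | 0 => !![0, 0, 0, 0, 0, 0, 0, 0, 0, 0, 0, 0;
      1, 0, 0, 0, 0, 0, 0, 0, 0, 0, 0, 0;
      0, 0, 0, 0, 0, 0, 0, 0, 0, 0, 0, 0;
      0, 0, 0, 0, 0, 0, 0, 0, 0, 0, 0, 0;
      0, 0, 0, 0, 0, 0, 0, 0, 0, 0, 0, 0;
      0, 0, 0, 1, 0, 0, 0, 0, 0, 0, 0, 0;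
      0, 0, 0, 0, 0, 0, 0, 0, 0, 0, 0, 0;
      0, 0, 1, 0, 0, 0, 0, 0, 0, 0, 0, 0;
      0, 0, 0, 0, 0, 0, 1, 0, 0, 0, 0, 0;
      0, 0, 0, 0, 1, 0, 0, 0, 0, 0, 0, 0;
      0, 0, 0, 0, 0, 0, 0, 0, 0, 0, 0, 0;
      0, 0, 0, 0, 0, 0, 0, 0, 0, 0, -1, 0]
  | 1 => !![0, 0, 0, 0, 0, 0, 0, 0, 0, 0, 0, 0;
      0, 0, 0, 0, 0, 0, 0, 0, 0, 0, 0, 0;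
      1, 0, 0, 0, 0, 0, 0, 0, 0, 0, 0, 0;
      0, 0, 0, 0, 0, 0, 0, 0, 0, 0, 0, 0;
      0, 0, 0, -1, 0, 0, 0, 0, 0, 0, 0, 0;
      0, 0, 0, 0, 0, 0, 0, 0, 0, 0, 0, 0;
      0, 1, 0, 0, 0, 0, 0, 0, 0, 0, 0, 0;
      0, 0, 0, -1, 0, 0, 0, 0, 0, 0, 0, 0;
      0, 0, 0, 0, -1, 0, 0, 1, 0, 0, 0, 0;
      0, 0, 0, 0, 0, 0, 0, 0, 0, 0, 0, 0;
      0, 0, 0, 0, 0, 1, 0, 0, 0, 0, 0, 0;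
      0, 0, 0, 0, 0, 0, 0, 0, 0, 1, 0, 0]
  | 2 => !![0, 0, 0, 0, 0, 0, 0, 0, 0, 0, 0, 0;
      0, 0, 0, 0, 0, 0, 0, 0, 0, 0, 0, 0;
      0, 0, 0, 0, 0, 0, 0, 0, 0, 0, 0, 0;
      1, 0, 0, 0, 0, 0, 0, 0, 0, 0, 0, 0;
      0, 1, 0, 0, 0, 0, 0, 0, 0, 0, 0, 0;
      0, 0, -1, 0, 0, 0, 0, 0, 0, 0, 0, 0;
      0, 0, -1, 0, 0, 0, 0, 0, 0, 0, 0, 0;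
      0, 0, 0, 0, 0, 0, 0, 0, 0, 0, 0, 0;
      0, 0, 0, 0, 0, 0, 0, 0, 0, 0, 0, 0;
      0, 0, 0, 0, 0, 1, -1, 0, 0, 0, 0, 0;
      0, 0, 0, 0, 0, 0, 0, 1, 0, 0, 0, 0;
      0, 0, 0, 0, 0, 0, 0, 0, 1, 0, 0, 0]

lemma Mz_sq : ∀ i : Fin 3, Mz i * Mz i = 0 := by decide
lemma Mz_r1 : Mz 0 * Mz 1 + Mz 1 * Mz 2 + Mz 2 * Mz 0 = 0 := by decide
lemma Mz_r2 : Mz 1 * Mz 0 + Mz 2 * Mz 1 + Mz 0 * Mz 2 = 0 := by decide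

lemma Mz_col_0 : (fun j => ((1 : Matrix (Fin 12) (Fin 12) ℤ)) j 0) = Pi.single (0 : Fin 12) (1 : ℤ) := by decide
lemma Mz_col_1 : (fun j => (Mz 0) j 0) = Pi.single (1 : Fin 12) (1 : ℤ) := by decide
lemma Mz_col_2 : (fun j => (Mz 1) j 0) = Pi.single (2 : Fin 12) (1 : ℤ) := by decide
lemma Mz_col_3 : (fun j => (Mz 2) j 0) = Pi.single (3 : Fin 12) (1 : ℤ) := by decide
lemma Mz_col_4 : (fun j => (Mz 2 * Mz 0) j 0) = Pi.single (4 : Fin 12) (1 : ℤ) := by decide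
lemma Mz_col_5 : (fun j => (Mz 0 * Mz 2) j 0) = Pi.single (5 : Fin 12) (1 : ℤ) := by decide
lemma Mz_col_6 : (fun j => (Mz 1 * Mz 0) j 0) = Pi.single (6 : Fin 12) (1 : ℤ) := by decide
lemma Mz_col_7 : (fun j => (Mz 0 * Mz 1) j 0) = Pi.single (7 : Fin 12) (1 : ℤ) := by decide
lemma Mz_col_8 : (fun j => (Mz 0 * Mz 1 * Mz 0) j 0) = Pi.single (8 : Fin 12) (1 : ℤ) := by decide
lemma Mz_col_9 : (fun j => (Mz 2 * Mz 0 * Mz 2) j 0) = Pi.single (9 : Fin 12) (1 : ℤ) := by decide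
lemma Mz_col_10 : (fun j => (Mz 2 * Mz 0 * Mz 1) j 0) = Pi.single (10 : Fin 12) (1 : ℤ) := by decide
lemma Mz_col_11 : (fun j => (Mz 2 * Mz 0 * Mz 1 * Mz 0) j 0) = Pi.single (11 : Fin 12) (1 : ℤ) := by decide

end Rep
section Final
variable (k : Type) [Field k]

/-- The matrices over `k`. -/
def Mk (k : Type) [Field k] : Fin 3 → Matrix (Fin 12) (Fin 12) k :=
  fun i => (Int.castRingHom k).mapMatrix (Mz i)

lemma Mk_sq (i : Fin 3) : Mk k i * Mk k i = 0 := by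
  rw [Mk, ← map_mul, Mz_sq, map_zero]

lemma Mk_r1 : Mk k 0 * Mk k 1 + Mk k 1 * Mk k 2 + Mk k 2 * Mk k 0 = 0 := by
  simp only [Mk, ← map_mul, ← map_add, Mz_r1, map_zero]

lemma Mk_r2 : Mk k 1 * Mk k 0 + Mk k 2 * Mk k 1 + Mk k 0 * Mk k 2 = 0 := by
  simp only [Mk, ← map_mul, ← map_add, Mz_r2, map_zero]

/-- The representation of `FK₃` on `k^12`. -/
def φ (k : Type) [Field k] : FK3 k →ₐ[k] Matrix (Fin 12) (Fin 12) k :=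
  RingQuot.liftAlgHom k ⟨FreeAlgebra.lift k (Mk k), by
    intro x y h
    induction h with
    | sq i => simp only [map_mul, map_zero, FreeAlgebra.lift_ι_apply, Mk_sq]
    | r1 => simp only [map_add, map_mul, map_zero, FreeAlgebra.lift_ι_apply]; exact Mk_r1 k
    | r2 => simp only [map_add, map_mul, map_zero, FreeAlgebra.lift_ι_apply]; exact Mk_r2 k⟩

lemma φ_xg (i : Fin 3) : φ k (xg k i) = Mk k i := by
  rw [φ, xg, RingQuot.liftAlgHom_mkAlgHom_apply, FreeAlgebra.lift_ι_apply]

/-- Extraction of the 0-th column of the representation. -/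
def Lc (k : Type) [Field k] : FK3 k →ₗ[k] (Fin 12 → k) where
  toFun y := fun j => φ k y j 0
  map_add' u v := by funext j; simp [map_add, Matrix.add_apply]
  map_smul' r u := by funext j; simp [map_smul, Matrix.smul_apply, smul_eq_mul]

lemma col_cast (A : Matrix (Fin 12) (Fin 12) ℤ) (i : Fin 12)
    (h : (fun j => A j 0) = Pi.single i (1 : ℤ)) :
    (fun j => ((Int.castRingHom k).mapMatrix A) j 0) = Pi.single i (1 : k) := by
  funext j
  have hj := congrFun h j
  have : ((Int.castRingHom k).mapMatrix A) j 0 = ((A j 0 : ℤ) : k) := rfl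
  rw [this, hj]
  rcases eq_or_ne j i with rfl | hne
  · simp
  · simp [Pi.single_apply, hne]

lemma φ_mul (A B : FK3 k) : φ k (A * B) = φ k A * φ k B := map_mul _ A B

lemma Lc_bs_0 : Lc k (bs k 0) = Pi.single (0 : Fin 12) (1 : k) := by
  show (fun j => φ k (1 : FK3 k) j 0) = _
  rw [show (φ k (1 : FK3 k)) = (Int.castRingHom k).mapMatrix 1 from by rw [map_one, map_one]]
  exact col_cast k _ _ Mz_col_0

lemma Lc_bs_1 : Lc k (bs k 1) = Pi.single (1 : Fin 12) (1 : k) := by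
  show (fun j => φ k (xg k 0) j 0) = _
  simp only [φ_mul, φ_xg, Mk, ← map_mul]
  exact col_cast k _ _ Mz_col_1

lemma Lc_bs_2 : Lc k (bs k 2) = Pi.single (2 : Fin 12) (1 : k) := by
  show (fun j => φ k (xg k 1) j 0) = _
  simp only [φ_mul, φ_xg, Mk, ← map_mul]
  exact col_cast k _ _ Mz_col_2

lemma Lc_bs_3 : Lc k (bs k 3) = Pi.single (3 : Fin 12) (1 : k) := by
  show (fun j => φ k (xg k 2) j 0) = _
  simp only [φ_mul, φ_xg, Mk, ← map_mul]
  exact col_cast k _ _ Mz_col_3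

lemma Lc_bs_4 : Lc k (bs k 4) = Pi.single (4 : Fin 12) (1 : k) := by
  show (fun j => φ k (xg k 2 * xg k 0) j 0) = _
  simp only [φ_mul, φ_xg, Mk, ← map_mul]
  exact col_cast k _ _ Mz_col_4

lemma Lc_bs_5 : Lc k (bs k 5) = Pi.single (5 : Fin 12) (1 : k) := by
  show (fun j => φ k (xg k 0 * xg k 2) j 0) = _
  simp only [φ_mul, φ_xg, Mk, ← map_mul]
  exact col_cast k _ _ Mz_col_5

lemma Lc_bs_6 : Lc k (bs k 6) = Pi.single (6 : Fin 12) (1 : k) := by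
  show (fun j => φ k (xg k 1 * xg k 0) j 0) = _
  simp only [φ_mul, φ_xg, Mk, ← map_mul]
  exact col_cast k _ _ Mz_col_6

lemma Lc_bs_7 : Lc k (bs k 7) = Pi.single (7 : Fin 12) (1 : k) := by
  show (fun j => φ k (xg k 0 * xg k 1) j 0) = _
  simp only [φ_mul, φ_xg, Mk, ← map_mul]
  exact col_cast k _ _ Mz_col_7

lemma Lc_bs_8 : Lc k (bs k 8) = Pi.single (8 : Fin 12) (1 : k) := by
  show (fun j => φ k (xg k 0 * xg k 1 * xg k 0) j 0) = _
  simp only [φ_mul, φ_xg, Mk, ← map_mul]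
  exact col_cast k _ _ Mz_col_8

lemma Lc_bs_9 : Lc k (bs k 9) = Pi.single (9 : Fin 12) (1 : k) := by
  show (fun j => φ k (xg k 2 * xg k 0 * xg k 2) j 0) = _
  simp only [φ_mul, φ_xg, Mk, ← map_mul]
  exact col_cast k _ _ Mz_col_9

lemma Lc_bs_10 : Lc k (bs k 10) = Pi.single (10 : Fin 12) (1 : k) := by
  show (fun j => φ k (xg k 2 * xg k 0 * xg k 1) j 0) = _
  simp only [φ_mul, φ_xg, Mk, ← map_mul]
  exact col_cast k _ _ Mz_col_10

lemma Lc_bs_11 : Lc k (bs k 11) = Pi.single (11 : Fin 12) (1 : k) := by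
  show (fun j => φ k (xg k 2 * xg k 0 * xg k 1 * xg k 0) j 0) = _
  simp only [φ_mul, φ_xg, Mk, ← map_mul]
  exact col_cast k _ _ Mz_col_11

lemma Lc_bs (idx : Fin 12) : Lc k (bs k idx) = Pi.single idx (1 : k) := by
  fin_cases idx
  exacts [Lc_bs_0 k, Lc_bs_1 k, Lc_bs_2 k, Lc_bs_3 k, Lc_bs_4 k, Lc_bs_5 k, Lc_bs_6 k, Lc_bs_7 k, Lc_bs_8 k, Lc_bs_9 k, Lc_bs_10 k, Lc_bs_11 k]

lemma bs_li : LinearIndependent k (bs k) := by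
  apply LinearIndependent.of_comp (Lc k)
  have he : (⇑(Lc k) ∘ bs k) = fun idx => Pi.single idx (1 : k) := by
    funext idx; exact Lc_bs k idx
  rw [he, Fintype.linearIndependent_iff]
  intro g hg i
  have := congrFun hg i
  simpa [Finset.sum_apply, Pi.single_apply] using this

lemma sp_top : SP k = ⊤ := by
  rw [eq_top_iff]
  have hright : ∀ s ∈ SP k, ∀ i : Fin 3, s * xg k i ∈ SP k := by
    intro s hs i
    induction hs using Submodule.span_induction with
    | mem x hx => obtain ⟨j, rfl⟩ := hx; exact right_mul_mem k j i
    | zero => rw [q_zero_mul]; exact (SP k).zero_mem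
    | add x y _ _ hx hy => rw [q_add_mul]; exact (SP k).add_mem hx hy
    | smul a x _ hx => rw [smul_mul_assoc]; exact (SP k).smul_mem a hx
  let T : Subalgebra k (FK3 k) :=
    { carrier := {y | ∀ s ∈ SP k, s * y ∈ SP k}
      mul_mem' := fun {y z} hy hz s hs => by
        rw [← mul_assoc]; exact hz _ (hy s hs)
      add_mem' := fun {y z} hy hz s hs => by
        rw [q_mul_add]; exact (SP k).add_mem (hy s hs) (hz s hs)
      one_mem' := fun s hs => by rwa [q_mul_one]
      algebraMap_mem' := fun r s hs => by
        rw [← Algebra.commutes, Algebra.smul_def (A := FK3 k) r s |>.symm]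
        exact (SP k).smul_mem r hs }
  have hgen : Set.range (xg k) ⊆ (T : Set (FK3 k)) := by
    rintro _ ⟨i, rfl⟩ s hs
    exact hright s hs i
  have htop : Algebra.adjoin k (Set.range (xg k)) = ⊤ := by
    have h1 := FreeAlgebra.adjoin_range_ι k (Fin 3)
    have h2 := AlgHom.map_adjoin (RingQuot.mkAlgHom k (FKRel k)) (Set.range (FreeAlgebra.ι k))
    rw [h1, Algebra.map_top] at h2
    rw [show Set.range (xg k) = ⇑(RingQuot.mkAlgHom k (FKRel k)) '' Set.range (FreeAlgebra.ι k)
        from by rw [← Set.range_comp]; rfl, ← h2]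
    exact (AlgHom.range_eq_top _).mpr (RingQuot.mkAlgHom_surjective k _)
  intro y _
  have hyT : y ∈ T := by
    have : Algebra.adjoin k (Set.range (xg k)) ≤ T := Algebra.adjoin_le_iff.mpr hgen
    exact this (htop ▸ Algebra.mem_top)
  have h1S : (1 : FK3 k) ∈ SP k := bs_mem k 0
  have := hyT 1 h1S
  rwa [q_one_mul] at this

end Final

/-- `FK₃` is 12-dimensional, with basis
`{1, x₀, x₁, x₂, x₂x₀, x₀x₂, x₁x₀, x₀x₁, x₀x₁x₀, x₂x₀x₂, x₂x₀x₁, x₂x₀x₁x₀}`. -/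
theorem stmt4 (k : Type) [Field k] [CharZero k] :
    Module.finrank k (FK3 k) = 12 ∧
    ∃ B : Module.Basis (Fin 12) k (FK3 k), ∀ idx : Fin 12,
      B idx = ![1, xg k 0, xg k 1, xg k 2,
        xg k 2 * xg k 0, xg k 0 * xg k 2, xg k 1 * xg k 0, xg k 0 * xg k 1,
        xg k 0 * xg k 1 * xg k 0, xg k 2 * xg k 0 * xg k 2,
        xg k 2 * xg k 0 * xg k 1, xg k 2 * xg k 0 * xg k 1 * xg k 0] idx := by
  have hsp : ⊤ ≤ Submodule.span k (Set.range (bs k)) := by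
    rw [show Submodule.span k (Set.range (bs k)) = SP k from rfl, sp_top]
  let B : Module.Basis (Fin 12) k (FK3 k) := Module.Basis.mk (bs_li k) hsp
  refine ⟨?_, B, fun idx => ?_⟩
  · rw [Module.finrank_eq_card_basis B, Fintype.card_fin]
  · exact Module.Basis.mk_apply (bs_li k) hsp idx
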